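/- arXiv:dg-ga/9512008 — 2 statements merged into one kernel-verified Lean document; each statement's English description precedes it below -/
import Mathlib

section
/- With B, T, δ and the Hermitian frame {Z_k} as above, the (0,1)-component of J(δ) ∈ V ⊂ V_ℂ equals (id + i J_ℂ) Σ_{k=1}^m B_ℂ(Z̄_k, Z_k), where the (0,1)-component of X ∈ V_ℂ is X^{0,1} := ½(X + i J_ℂ X). (This is the key identity (JδJ)^{0,1} = (1 + iJ) Σ_k ∇_{Z̄_k} Z_k used in the proof that holomorphic maps into (1,2)-symplectic manifolds have tension field τ(φ) = -dφ(JδJ).) -/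
open scoped TensorProduct

/-- The complex-linear extension `J_ℂ` of an ℝ-linear map `J : V → V` to the
complexification `V_ℂ = ℂ ⊗[ℝ] V`. -/
noncomputable def complexJ {V : Type*} [AddCommGroup V] [Module ℝ V]
    (J : V →ₗ[ℝ] V) : ℂ ⊗[ℝ] V →ₗ[ℂ] ℂ ⊗[ℝ] V :=
  J.baseChange ℂ

/-- The `(0,1)`-component `X^{0,1} = ½(X + i J_ℂ X)`. -/
noncomputable def comp01 {V : Type*} [AddCommGroup V] [Module ℝ V]
    (J : V →ₗ[ℝ] V) (X : ℂ ⊗[ℝ] V) : ℂ ⊗[ℝ] V :=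
  (1 / 2 : ℂ) • (X + Complex.I • complexJ J X)

/-- The Hermitian frame vector `Z_k = (e_k - i J e_k)/√2` in `V_ℂ`. -/
noncomputable def hermZ {V : Type*} [AddCommGroup V] [Module ℝ V] {m : ℕ}
    (J : V →ₗ[ℝ] V) (e : Fin m → V) (k : Fin m) : ℂ ⊗[ℝ] V :=
  ((Real.sqrt 2 : ℂ))⁻¹ • ((1 : ℂ) ⊗ₜ[ℝ] e k - Complex.I • ((1 : ℂ) ⊗ₜ[ℝ] J (e k)))

/-- The conjugate Hermitian frame vector `Z̄_k = (e_k + i J e_k)/√2` in `V_ℂ`. -/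
noncomputable def hermZbar {V : Type*} [AddCommGroup V] [Module ℝ V] {m : ℕ}
    (J : V →ₗ[ℝ] V) (e : Fin m → V) (k : Fin m) : ℂ ⊗[ℝ] V :=
  ((Real.sqrt 2 : ℂ))⁻¹ • ((1 : ℂ) ⊗ₜ[ℝ] e k + Complex.I • ((1 : ℂ) ⊗ₜ[ℝ] J (e k)))

theorem stmt11 {V : Type*} [NormedAddCommGroup V] [InnerProductSpace ℝ V]
    [FiniteDimensional ℝ V]
    (J : V →ₗ[ℝ] V) (hJ : ∀ v, J (J v) = -v)
    (hJiso : ∀ x y : V, inner ℝ (J x) (J y) = (inner ℝ x y : ℝ))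
    -- an ℝ-bilinear map `B : V × V → V`:
    (B : V →ₗ[ℝ] V →ₗ[ℝ] V)
    -- `Bc` is the complex-bilinear extension of `B` to `V_ℂ × V_ℂ → V_ℂ`:
    (Bc : ℂ ⊗[ℝ] V →ₗ[ℂ] ℂ ⊗[ℝ] V →ₗ[ℂ] ℂ ⊗[ℝ] V)
    (hBc : ∀ x y : V, Bc ((1 : ℂ) ⊗ₜ[ℝ] x) ((1 : ℂ) ⊗ₜ[ℝ] y) = (1 : ℂ) ⊗ₜ[ℝ] (B x y))
    -- `T(X,Y) := B(X, JY) - J B(X, Y)`: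
    (T : V → V → V) (hT : ∀ X Y : V, T X Y = B X (J Y) - J (B X Y))
    -- an orthonormal basis `{e_1, …, e_m, Je_1, …, Je_m}` of `V`:
    {m : ℕ} (e : Fin m → V)
    (b : Module.Basis (Fin m ⊕ Fin m) ℝ V) (hb : Orthonormal ℝ ⇑b)
    (hbe : ∀ k : Fin m, b (Sum.inl k) = e k)
    (hbJe : ∀ k : Fin m, b (Sum.inr k) = J (e k))
    -- `δ := Σ_k [T(e_k, e_k) + T(Je_k, Je_k)]`:
    (δ : V) (hδ : δ = ∑ k : Fin m, (T (e k) (e k) + T (J (e k)) (J (e k)))) :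
    comp01 J ((1 : ℂ) ⊗ₜ[ℝ] (J δ)) =
      (∑ k : Fin m, Bc (hermZbar J e k) (hermZ J e k))
        + Complex.I • complexJ J (∑ k : Fin m, Bc (hermZbar J e k) (hermZ J e k)) := by

  have hs : ((Real.sqrt 2 : ℂ))⁻¹ * ((Real.sqrt 2 : ℂ))⁻¹ = (1/2 : ℂ) := by
    rw [← mul_inv, ← Complex.ofReal_mul, Real.mul_self_sqrt (by norm_num)]
    norm_num
  have hs2 : ((Real.sqrt 2 : ℂ))⁻¹ ^ 2 = (1/2 : ℂ) := by rw [sq, hs]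
  have key : ∀ k : Fin m, Bc (hermZbar J e k) (hermZ J e k) =
      (1/2 : ℂ) • (((1:ℂ) ⊗ₜ[ℝ] (B (e k) (e k)) + (1:ℂ) ⊗ₜ[ℝ] (B (J (e k)) (J (e k))))
        + Complex.I • ((1:ℂ) ⊗ₜ[ℝ] (B (J (e k)) (e k)))
        - Complex.I • ((1:ℂ) ⊗ₜ[ℝ] (B (e k) (J (e k))))) := by
    intro k
    simp only [hermZ, hermZbar, map_smul, LinearMap.smul_apply, smul_smul, hs,
      map_add, map_sub, LinearMap.add_apply, LinearMap.sub_apply, hBc]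
    match_scalars <;> ring_nf <;> (try simp [hs2, Complex.I_sq]) <;> ring
  subst hδ
  simp only [hT, key, map_sum, TensorProduct.tmul_sum, comp01, complexJ,
    LinearMap.baseChange_tmul, Finset.smul_sum, ← Finset.sum_add_distrib]
  refine Finset.sum_congr rfl fun k _ => ?_
  simp only [map_add, map_sub, map_smul, hJ, map_neg, TensorProduct.tmul_add,
    TensorProduct.tmul_sub, TensorProduct.tmul_neg, TensorProduct.tmul_smul,
    LinearMap.baseChange_tmul]
  match_scalars <;> ring_nf <;> (try simp [hs2, Complex.I_sq]) <;> ring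
end

section
/- There exists λ ≥ 0 such that ⟨f x, f y⟩_W = λ² ⟨x, y⟩_V for all x, y in the orthogonal complement of ker f; that is, f restricted to (ker f)^⊥ is a conformal linear map. Moreover, if f ≠ 0 then f maps (ker f)^⊥ onto W. (This is the pointwise fact that any holomorphic map from an almost Hermitian manifold to a complex 1-dimensional almost Hermitian manifold is horizontally weakly conformal.) -/
open Submodule

lemma li_of_orth {E : Type*} [NormedAddCommGroup E] [InnerProductSpace ℝ E]
    {x y : E} (hx : x ≠ 0) (hy : y ≠ 0) (hxy : (inner ℝ x y : ℝ) = 0) :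
    LinearIndependent ℝ ![x, y] := by
  rw [LinearIndependent.pair_iff]
  intro s t hst
  have h1 : s * (inner ℝ x x : ℝ) = 0 := by
    have := congrArg (fun z => (inner ℝ x z : ℝ)) hst
    simp only [inner_add_right, real_inner_smul_right, hxy, mul_zero, add_zero,
      inner_zero_right] at this
    exact this
  have h2 : t * (inner ℝ y y : ℝ) = 0 := by
    have := congrArg (fun z => (inner ℝ y z : ℝ)) hst
    simp only [inner_add_right, real_inner_smul_right, inner_zero_right] at this
    rw [real_inner_comm x y, hxy, mul_zero, zero_add] at this
    exact this
  constructor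
  · rcases mul_eq_zero.mp h1 with h | h
    · exact h
    · exact absurd (inner_self_eq_zero.mp h) hx
  · rcases mul_eq_zero.mp h2 with h | h
    · exact h
    · exact absurd (inner_self_eq_zero.mp h) hy

theorem stmt13 {V : Type*} [NormedAddCommGroup V] [InnerProductSpace ℝ V]
    [FiniteDimensional ℝ V]
    {W : Type*} [NormedAddCommGroup W] [InnerProductSpace ℝ W]
    [FiniteDimensional ℝ W]
    (J : V →ₗ[ℝ] V) (hJ : ∀ v, J (J v) = -v)
    (hJiso : ∀ x y : V, inner ℝ (J x) (J y) = (inner ℝ x y : ℝ))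
    (J' : W →ₗ[ℝ] W) (hJ' : ∀ w, J' (J' w) = -w)
    (hJ'iso : ∀ u v : W, inner ℝ (J' u) (J' v) = (inner ℝ u v : ℝ))
    (hdimW : Module.finrank ℝ W = 2)
    (f : V →ₗ[ℝ] W) (hf : ∀ v : V, f (J v) = J' (f v)) :
    ∃ lam : ℝ, 0 ≤ lam ∧
      (∀ x ∈ (LinearMap.ker f)ᗮ, ∀ y ∈ (LinearMap.ker f)ᗮ,
        (inner ℝ (f x) (f y) : ℝ) = lam ^ 2 * inner ℝ x y) ∧
      (f ≠ 0 → ∀ w : W, ∃ x ∈ (LinearMap.ker f)ᗮ, f x = w) := by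
  by_cases hf0 : f = 0
  · refine ⟨0, le_refl _, ?_, fun h => absurd hf0 h⟩
    intro x hx y hy
    simp [hf0]
  -- kernel is J-invariant
  have hkerJ : ∀ v ∈ LinearMap.ker f, J v ∈ LinearMap.ker f := by
    intro v hv
    simp only [LinearMap.mem_ker] at hv ⊢
    rw [hf, hv, map_zero]
  -- (ker f)ᗮ is J-invariant
  have hKJ : ∀ x ∈ (LinearMap.ker f)ᗮ, J x ∈ (LinearMap.ker f)ᗮ := by
    intro x hx
    rw [Submodule.mem_orthogonal] at hx ⊢
    intro v hv
    rw [← hJiso v (J x), hJ, inner_neg_right, hx (J v) (hkerJ v hv), neg_zero]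
  -- injective on (ker f)ᗮ
  have hinj : ∀ x ∈ (LinearMap.ker f)ᗮ, f x = 0 → x = 0 := fun x hx hfx =>
    inner_self_eq_zero.mp ((Submodule.mem_orthogonal _ x).mp hx x hfx)
  -- finrank bound
  have hrankK : Module.finrank ℝ (LinearMap.ker f)ᗮ ≤ 2 := by
    have hfi : Function.Injective (f.comp (LinearMap.ker f)ᗮ.subtype) := by
      rw [← LinearMap.ker_eq_bot, LinearMap.ker_eq_bot']
      intro ⟨x, hx⟩ h
      simp only [LinearMap.comp_apply, Submodule.subtype_apply] at h
      exact Subtype.ext (hinj x hx h)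
    calc Module.finrank ℝ (LinearMap.ker f)ᗮ ≤ Module.finrank ℝ W :=
          LinearMap.finrank_le_finrank_of_injective hfi
      _ = 2 := hdimW
  -- pick a unit vector e
  have hKne : (LinearMap.ker f)ᗮ ≠ ⊥ := by
    intro h
    rw [Submodule.orthogonal_eq_bot_iff] at h
    exact hf0 (LinearMap.ker_eq_top.mp h)
  obtain ⟨e₀, he₀K, he₀⟩ := Submodule.exists_mem_ne_zero_of_ne_bot hKne
  obtain ⟨e, heK, hene⟩ : ∃ e ∈ (LinearMap.ker f)ᗮ, ‖e‖ = 1 :=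
    ⟨‖e₀‖⁻¹ • e₀, Submodule.smul_mem _ _ he₀K, by
      rw [norm_smul, norm_inv, norm_norm, inv_mul_cancel₀ (norm_ne_zero_iff.mpr he₀)]⟩
  have hee : (inner ℝ e e : ℝ) = 1 := by
    rw [real_inner_self_eq_norm_sq, hene]; norm_num
  have hJeK : J e ∈ (LinearMap.ker f)ᗮ := hKJ e heK
  have heJe : (inner ℝ e (J e) : ℝ) = 0 := by
    have h1 : (inner ℝ e (J e) : ℝ) = - inner ℝ e (J e) := by
      conv_lhs => rw [← hJiso e (J e), hJ, inner_neg_right, real_inner_comm]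
    linarith
  have hJeJe : (inner ℝ (J e) (J e) : ℝ) = 1 := by rw [hJiso, hee]
  have hJene : J e ≠ 0 := fun h => by
    rw [h, inner_zero_left] at hJeJe; norm_num at hJeJe
  have hene' : e ≠ 0 := fun h => by rw [h, norm_zero] at hene; norm_num at hene
  have hli : LinearIndependent ℝ ![e, J e] := li_of_orth hene' hJene heJe
  have hset : ({e, J e} : Set V) = Set.range ![e, J e] := by
    simp [Matrix.range_cons, Matrix.range_empty, Set.pair_comm]
  have hspan : Submodule.span ℝ {e, J e} = (LinearMap.ker f)ᗮ := by
    have hle : Submodule.span ℝ {e, J e} ≤ (LinearMap.ker f)ᗮ := by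
      rw [Submodule.span_le]
      intro z hz
      rcases hz with h | h
      · exact h ▸ heK
      · simp only [Set.mem_singleton_iff] at h
        exact h ▸ hJeK
    have hrs : Module.finrank ℝ (Submodule.span ℝ ({e, J e} : Set V)) = 2 := by
      rw [hset]
      have := finrank_span_eq_card hli
      simpa using this
    exact Submodule.eq_of_le_of_finrank_le hle (by rw [hrs]; exact hrankK)
  have hfe2 : (inner ℝ (f e) (f e) : ℝ) = ‖f e‖ ^ 2 := by
    rw [real_inner_self_eq_norm_sq, sq]
  have hfeJ : (inner ℝ (f e) (f (J e)) : ℝ) = 0 := by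
    rw [hf]
    have h1 : (inner ℝ (f e) (J' (f e)) : ℝ) = - inner ℝ (f e) (J' (f e)) := by
      conv_lhs => rw [← hJ'iso (f e) (J' (f e)), hJ', inner_neg_right, real_inner_comm]
    linarith
  have hfJe2 : (inner ℝ (f (J e)) (f (J e)) : ℝ) = ‖f e‖ ^ 2 := by
    rw [hf, hJ'iso, hfe2]
  refine ⟨‖f e‖, norm_nonneg _, ?_, ?_⟩
  · intro x hx y hy
    rw [← hspan] at hx hy
    obtain ⟨a, b, hab⟩ := Submodule.mem_span_pair.mp hx
    obtain ⟨c, d, hcd⟩ := Submodule.mem_span_pair.mp hy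
    subst hab hcd
    simp only [map_add, map_smul, inner_add_left, inner_add_right,
      real_inner_smul_left, real_inner_smul_right]
    have hJee : (inner ℝ (J e) e : ℝ) = 0 := by rw [real_inner_comm]; exact heJe
    have hfJee : (inner ℝ (f (J e)) (f e) : ℝ) = 0 := by rw [real_inner_comm]; exact hfeJ
    rw [hfe2, hfeJ, hfJe2, hee, heJe, hJeJe, hJee, hfJee]
    ring
  · intro _ w
    have hfene : f e ≠ 0 := fun h => hene' (hinj e heK h)
    have hJ'fene : J' (f e) ≠ 0 := by
      intro h
      have := congrArg J' h
      rw [hJ', map_zero] at this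
      exact hfene (by simpa using this.symm)
    have hfeJ' : (inner ℝ (f e) (J' (f e)) : ℝ) = 0 := by rw [← hf]; exact hfeJ
    have hliW : LinearIndependent ℝ ![f e, J' (f e)] := li_of_orth hfene hJ'fene hfeJ'
    have hsetW : ({f e, J' (f e)} : Set W) = Set.range ![f e, J' (f e)] := by
      simp [Matrix.range_cons, Matrix.range_empty, Set.pair_comm]
    have hspanW : Submodule.span ℝ {f e, J' (f e)} = ⊤ := by
      apply Submodule.eq_top_of_finrank_eq
      rw [hsetW]
      have := finrank_span_eq_card hliW
      simpa [hdimW] using this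
    have hw : w ∈ Submodule.span ℝ {f e, J' (f e)} := hspanW ▸ Submodule.mem_top
    obtain ⟨a, b, hab⟩ := Submodule.mem_span_pair.mp hw
    refine ⟨a • e + b • J e, Submodule.add_mem _ (Submodule.smul_mem _ _ heK)
      (Submodule.smul_mem _ _ hJeK), ?_⟩
    rw [map_add, map_smul, map_smul, hf]
    exact hab
end
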